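/- Let p be a prime, L = ℓ₀ + ℓ₁∂ + … + ℓ_r∂^r with ℓ_i ∈ 𝔽_p[x], ℓ_r ≠ 0, and let A be its companion matrix with A₁ = A, A_{k+1} = A_k' + A·A_k. Then the p-curvature matrix A_p, written as B_p/ℓ_r^p with B_p = ℓ_r^p·A_p, is a polynomial matrix whose entries have degree at most d·p, where d bounds the degrees of the ℓ_i. -/

import Mathlib

open Polynomial

/-- Entrywise derivative on rational functions over `ZMod p`:
`(num/denom)' = (num' * denom - num * denom') / denom^2`. -/
noncomputable def ratDeriv {p : ℕ} [Fact p.Prime] (f : RatFunc (ZMod p)) : RatFunc (ZMod p) :=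
  algebraMap (Polynomial (ZMod p)) (RatFunc (ZMod p))
      (derivative f.num * f.denom - f.num * derivative f.denom) /
    algebraMap (Polynomial (ZMod p)) (RatFunc (ZMod p)) (f.denom ^ 2)

/-- Companion matrix of `L = ℓ₀ + ℓ₁ ∂ + ⋯ + ℓ_r ∂^r`. -/
noncomputable def companion (p r : ℕ) [Fact p.Prime] (ℓ : ℕ → Polynomial (ZMod p)) :
    Matrix (Fin r) (Fin r) (RatFunc (ZMod p)) :=
  fun i j =>
    if (j : ℕ) = r - 1 then
      - algebraMap (Polynomial (ZMod p)) (RatFunc (ZMod p)) (ℓ (i : ℕ)) /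
          algebraMap (Polynomial (ZMod p)) (RatFunc (ZMod p)) (ℓ r)
    else if (i : ℕ) = (j : ℕ) + 1 then 1 else 0

/-- The sequence `A₁ = A`, `A_{k+1} = A_k' + A·A_k` (with `A₀ = I`). -/
noncomputable def Aseq {p r : ℕ} [Fact p.Prime]
    (A : Matrix (Fin r) (Fin r) (RatFunc (ZMod p))) :
    ℕ → Matrix (Fin r) (Fin r) (RatFunc (ZMod p))
  | 0 => 1
  | 1 => A
  | (k + 2) => (Aseq A (k + 1)).map ratDeriv + A * Aseq A (k + 1)


lemma ratDeriv_div {p : ℕ} [Fact p.Prime] (a b : Polynomial (ZMod p)) (hb : b ≠ 0) :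
    ratDeriv (algebraMap (Polynomial (ZMod p)) (RatFunc (ZMod p)) a /
        algebraMap (Polynomial (ZMod p)) (RatFunc (ZMod p)) b) =
      algebraMap (Polynomial (ZMod p)) (RatFunc (ZMod p))
          (derivative a * b - a * derivative b) /
        algebraMap (Polynomial (ZMod p)) (RatFunc (ZMod p)) (b ^ 2) := by
  set φ := algebraMap (Polynomial (ZMod p)) (RatFunc (ZMod p)) with hφ
  have hinj : Function.Injective φ := RatFunc.algebraMap_injective (ZMod p)
  set f := φ a / φ b with hf
  have hD : f.denom ≠ 0 := f.denom_ne_zero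
  have hb' : φ b ≠ 0 := fun h => hb (hinj (by simpa using h))
  have hD' : φ f.denom ≠ 0 := fun h => hD (hinj (by simpa using h))
  have hcross : f.num * b = a * f.denom := by
    have h1 : φ f.num / φ f.denom = φ a / φ b := RatFunc.num_div_denom f
    rw [div_eq_div_iff hD' hb'] at h1
    exact hinj (by rw [map_mul, map_mul]; exact h1)
  have hd := congrArg derivative hcross
  simp only [derivative_mul] at hd
  show φ _ / φ _ = φ _ / φ _
  have hD2 : φ (f.denom ^ 2) ≠ 0 := by rw [map_pow]; exact pow_ne_zero 2 hD'
  have hb2 : φ (b ^ 2) ≠ 0 := by rw [map_pow]; exact pow_ne_zero 2 hb'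
  rw [div_eq_div_iff hD2 hb2, ← map_mul, ← map_mul]
  exact congrArg φ (by linear_combination (f.denom * b) * hd -
    (derivative f.denom * b + derivative b * f.denom) * hcross)

lemma comp_entry {p d r : ℕ} [Fact p.Prime]
    (ℓ : ℕ → Polynomial (ZMod p)) (hdeg : ∀ i ≤ r, (ℓ i).natDegree ≤ d) (hlr : ℓ r ≠ 0)
    (i j : Fin r) :
    ∃ s : Polynomial (ZMod p), s.natDegree ≤ d ∧
      algebraMap (Polynomial (ZMod p)) (RatFunc (ZMod p)) (ℓ r) * companion p r ℓ i j =
        algebraMap (Polynomial (ZMod p)) (RatFunc (ZMod p)) s := by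
  set φ := algebraMap (Polynomial (ZMod p)) (RatFunc (ZMod p)) with hφ
  have hinj : Function.Injective φ := RatFunc.algebraMap_injective (ZMod p)
  have hlr' : φ (ℓ r) ≠ 0 := fun h => hlr (hinj (h.trans (map_zero φ).symm))
  unfold companion
  by_cases h1 : (j : ℕ) = r - 1
  · refine ⟨-ℓ i, by simpa using hdeg i i.2.le, ?_⟩
    rw [if_pos h1, map_neg]
    field_simp
    rw [← hφ]
    field_simp
  · rw [if_neg h1]
    by_cases h2 : (i : ℕ) = (j : ℕ) + 1
    · exact ⟨ℓ r, hdeg r le_rfl, by rw [if_pos h2, mul_one]⟩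
    · exact ⟨0, by simp, by rw [if_neg h2, mul_zero, map_zero]⟩

lemma key {p d r : ℕ} [Fact p.Prime]
    (ℓ : ℕ → Polynomial (ZMod p)) (hdeg : ∀ i ≤ r, (ℓ i).natDegree ≤ d) (hlr : ℓ r ≠ 0) :
    ∀ (k : ℕ) (i j : Fin r),
      ∃ q : Polynomial (ZMod p), q.natDegree ≤ d * (k + 1) ∧
        algebraMap (Polynomial (ZMod p)) (RatFunc (ZMod p)) (ℓ r ^ (k + 1)) *
          Aseq (companion p r ℓ) (k + 1) i j =
          algebraMap (Polynomial (ZMod p)) (RatFunc (ZMod p)) q := by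
  set φ := algebraMap (Polynomial (ZMod p)) (RatFunc (ZMod p)) with hφ
  have hinj : Function.Injective φ := RatFunc.algebraMap_injective (ZMod p)
  intro k
  induction k with
  | zero =>
    intro i j
    obtain ⟨s, h1, h2⟩ := comp_entry ℓ hdeg hlr i j
    exact ⟨s, by simpa using h1, by simpa [Aseq] using h2⟩
  | succ k ih =>
    intro i j
    obtain ⟨q, hq1, hq2⟩ := ih i j
    choose s hs1 hs2 using comp_entry ℓ hdeg hlr i
    choose qf hqf1 hqf2 using fun m => ih m j
    have hpw : φ (ℓ r ^ (k + 1)) ≠ 0 := fun h =>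
      (pow_ne_zero (k + 1) hlr) (hinj (h.trans (map_zero φ).symm))
    set t1 : Polynomial (ZMod p) :=
      derivative q * ℓ r - C ((k + 1 : ℕ) : ZMod p) * q * derivative (ℓ r) with ht1
    have hmul : d * (k + 2) = d * (k + 1) + d := by ring
    refine ⟨t1 + ∑ m, s m * qf m, ?_, ?_⟩
    · have hb1 : (derivative q * ℓ r).natDegree ≤ d * (k + 2) := by
        refine le_trans natDegree_mul_le ?_
        have := natDegree_derivative_le q
        have := hdeg r le_rfl
        omega
      have hb2 : (C ((k + 1 : ℕ) : ZMod p) * q * derivative (ℓ r)).natDegree ≤ d * (k + 2) := by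
        refine le_trans natDegree_mul_le ?_
        have h3 : (C ((k + 1 : ℕ) : ZMod p) * q).natDegree ≤ d * (k + 1) := by
          refine le_trans natDegree_mul_le ?_
          rw [natDegree_C, zero_add]
          exact hq1
        have := natDegree_derivative_le (ℓ r)
        have := hdeg r le_rfl
        omega
      have hbt : t1.natDegree ≤ d * (k + 2) := by
        rw [ht1]; exact le_trans (natDegree_sub_le _ _) (by omega)
      have hbs : (∑ m, s m * qf m).natDegree ≤ d * (k + 2) := by
        refine natDegree_sum_le_of_forall_le _ _ fun m _ => ?_
        refine le_trans natDegree_mul_le ?_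
        have := hs1 m
        have := hqf1 m
        omega
      exact le_trans (natDegree_add_le _ _) (max_le hbt hbs)
    · show φ (ℓ r ^ (k + 2)) *
        ((Aseq (companion p r ℓ) (k + 2)) i j) = _
      have hAe : Aseq (companion p r ℓ) (k + 2) i j =
          ratDeriv (Aseq (companion p r ℓ) (k + 1) i j) +
            ∑ m, companion p r ℓ i m * Aseq (companion p r ℓ) (k + 1) m j := by
        show ((Aseq (companion p r ℓ) (k + 1)).map ratDeriv +
          companion p r ℓ * Aseq (companion p r ℓ) (k + 1)) i j = _
        rw [Matrix.add_apply, Matrix.map_apply, Matrix.mul_apply]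
      rw [hAe, mul_add, map_add]
      congr 1
      · -- derivative part
        have hrep : Aseq (companion p r ℓ) (k + 1) i j = φ q / φ (ℓ r ^ (k + 1)) := by
          rw [eq_div_iff hpw, mul_comm]; exact hq2
        rw [hrep, ratDeriv_div _ _ (pow_ne_zero _ hlr)]
        have hD2 : φ ((ℓ r ^ (k + 1)) ^ 2) ≠ 0 := fun h =>
          (pow_ne_zero 2 (pow_ne_zero (k + 1) hlr)) (hinj (h.trans (map_zero φ).symm))
        rw [← mul_div_assoc, div_eq_iff hD2, ← map_mul, ← map_mul]
        refine congrArg φ ?_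
        rw [derivative_pow, Nat.add_sub_cancel, ht1]
        ring
      · -- sum part
        rw [Finset.mul_sum, map_sum]
        refine Finset.sum_congr rfl fun m _ => ?_
        rw [map_mul, ← hs2 m, ← hqf2 m, pow_succ', map_mul]
        ring

/-- the p-curvature `A_p`, written as `B_p/ℓ_r^p` with `B_p = ℓ_r^p · A_p`,
is a polynomial matrix whose entries have degree at most `d·p`. -/
theorem stmt1 (p d r : ℕ) [Fact p.Prime] (hr : 0 < r)
    (ℓ : ℕ → Polynomial (ZMod p)) (hdeg : ∀ i ≤ r, (ℓ i).natDegree ≤ d) (hlr : ℓ r ≠ 0)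
    (i j : Fin r) :
    ∃ q : Polynomial (ZMod p), q.natDegree ≤ d * p ∧
      algebraMap (Polynomial (ZMod p)) (RatFunc (ZMod p)) (ℓ r ^ p) *
        Aseq (companion p r ℓ) p i j =
      algebraMap (Polynomial (ZMod p)) (RatFunc (ZMod p)) q := by
  obtain ⟨q, h1, h2⟩ := key ℓ hdeg hlr (p - 1) i j
  have hp : p - 1 + 1 = p := by
    have := (Fact.out : p.Prime).pos
    omega
  rw [hp] at h1 h2
  exact ⟨q, h1, h2⟩
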